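/- For all positive integers m, n and every complex number t, Σ_{H ≤ ℤ_m × ℤ_n} |H|^t = Σ_{i ∣ m} Σ_{j ∣ n} lcm(i,j)^t · (id_t * φ)(gcd(i,j)), where (id_t * φ)(d) = Σ_{e ∣ d} e^t φ(d/e). -/

import Mathlib

open AddSubgroup


open AddSubgroup

lemma mulLeft_apply' {R : Type*} [NonUnitalNonAssocSemiring R] (x y : R) :
    AddMonoidHom.mulLeft x y = x * y := rfl

-- range of mulLeft = zmultiples
lemma range_mulLeft_eq_zmultiples {c : ℕ} (x : ZMod c) :
    (AddMonoidHom.mulLeft x).range = zmultiples x := by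
  ext y
  simp only [AddMonoidHom.mem_range, mulLeft_apply', mem_zmultiples_iff]
  constructor
  · rintro ⟨z, rfl⟩
    obtain ⟨j, rfl⟩ := ZMod.intCast_surjective (n := c) z
    exact ⟨j, by rw [zsmul_eq_mul]; ring⟩
  · rintro ⟨j, rfl⟩
    exact ⟨(j : ZMod c), by rw [zsmul_eq_mul]; ring⟩

lemma ker_eq_range (c d : ℕ) (hc : 0 < c) (hd : d ∣ c) :
    (AddMonoidHom.mulLeft ((d : ZMod c))).ker
      = (AddMonoidHom.mulLeft (((c / d : ℕ) : ZMod c))).range := by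
  haveI : NeZero c := ⟨hc.ne'⟩
  have hd0 : 0 < d := Nat.pos_of_dvd_of_pos hd hc
  ext y
  simp only [AddMonoidHom.mem_ker, AddMonoidHom.mem_range, mulLeft_apply']
  constructor
  · intro h
    have hy : ((y.val : ℕ) : ZMod c) = y := by
      rw [ZMod.natCast_val, ZMod.cast_id]
    have h2 : ((d * y.val : ℕ) : ZMod c) = 0 := by push_cast; rw [hy]; exact h
    rw [ZMod.natCast_eq_zero_iff] at h2
    have hc' : d * (c / d) ∣ d * y.val := by rw [Nat.mul_div_cancel' hd]; exact h2
    have h3 : c / d ∣ y.val := (Nat.mul_dvd_mul_iff_left hd0).mp hc'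
    obtain ⟨w, hw⟩ := h3
    exact ⟨(w : ZMod c), by rw [← hy, hw]; push_cast; ring⟩
  · rintro ⟨z, rfl⟩
    rw [← mul_assoc, ← Nat.cast_mul, Nat.mul_div_cancel' hd, ZMod.natCast_self, zero_mul]

lemma card_ker_mulLeft (c k : ℕ) (hc : 0 < c) :
    Nat.card (AddMonoidHom.mulLeft ((k : ZMod c))).ker = Nat.gcd c k := by
  haveI : NeZero c := ⟨hc.ne'⟩
  set g := Nat.gcd c k with hg
  have hgd : g ∣ c := Nat.gcd_dvd_left c k
  have hkg : (AddMonoidHom.mulLeft ((k : ZMod c))).ker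
      = (AddMonoidHom.mulLeft ((g : ZMod c))).ker := by
    ext y
    simp only [AddMonoidHom.mem_ker, mulLeft_apply']
    constructor
    · intro h
      have hb : (g : ℤ) = c * Nat.gcdA c k + k * Nat.gcdB c k := Nat.gcd_eq_gcd_ab c k
      have h2 : ((g : ℤ) : ZMod c) = ((c * Nat.gcdA c k + k * Nat.gcdB c k : ℤ) : ZMod c) := by
        rw [← hb]
      push_cast at h2
      rw [ZMod.natCast_self, zero_mul, zero_add] at h2
      calc (g : ZMod c) * y = ((Nat.gcdB c k : ZMod c)) * ((k : ZMod c) * y) := by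
            rw [h2]; ring
        _ = 0 := by rw [h, mul_zero]
    · intro h
      obtain ⟨k', hk'⟩ := Nat.gcd_dvd_right c k
      calc (k : ZMod c) * y = (k' : ZMod c) * ((g : ZMod c) * y) := by
            rw [hk']; push_cast; ring
        _ = 0 := by rw [h, mul_zero]
  rw [hkg, ker_eq_range c g hc hgd, range_mulLeft_eq_zmultiples, Nat.card_zmultiples,
    ZMod.addOrderOf_coe _ hc.ne']
  rw [Nat.gcd_eq_right (Nat.div_dvd_of_dvd hgd), Nat.div_div_self hgd hc.ne']

open AddSubgroup


lemma card_addHom_cyclic (C D : Type*) [AddGroup C] [AddCommGroup D]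
    [Finite C] [Finite D] [IsAddCyclic C] [IsAddCyclic D] :
    Nat.card (C →+ D) = Nat.gcd (Nat.card C) (Nat.card D) := by
  set a := Nat.card C with ha
  set c := Nat.card D with hc
  have ha0 : 0 < a := Nat.card_pos
  have hc0 : 0 < c := Nat.card_pos
  have e1 : ZMod a ≃+ C := zmodAddCyclicAddEquiv ‹IsAddCyclic C›
  have e2 : ZMod c ≃+ D := zmodAddCyclicAddEquiv ‹IsAddCyclic D›
  have E1 : (C →+ D) ≃ (ZMod a →+ ZMod c) :=
    (e1.addMonoidHomCongrLeftEquiv.trans e2.addMonoidHomCongrRightEquiv).symm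
  have E2 : (ZMod a →+ ZMod c) ≃ {f : ℤ →+ ZMod c // f (a : ℤ) = 0} := (ZMod.lift (A := ZMod c) a).symm
  have E3 : {f : ℤ →+ ZMod c // f (a : ℤ) = 0} ≃ {y : ZMod c // (a : ℤ) • y = 0} :=
    Equiv.subtypeEquiv (zmultiplesHom (ZMod c)).symm (by
      intro f
      rw [zmultiplesHom_symm_apply]
      constructor
      · intro h; rw [← h]; rw [← AddMonoidHom.map_zsmul]; norm_num
      · intro h; rw [show ((a:ℤ)) = (a:ℤ) • (1:ℤ) by simp, AddMonoidHom.map_zsmul]; exact h)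
  have E4 : {y : ZMod c // (a : ℤ) • y = 0} ≃ (AddMonoidHom.mulLeft ((a : ZMod c))).ker :=
    Equiv.subtypeEquivRight (by
      intro y
      rw [AddMonoidHom.mem_ker]
      show (a : ℤ) • y = 0 ↔ AddMonoidHom.mulLeft ((a : ZMod c)) y = 0
      show _ ↔ (a : ZMod c) * y = 0
      rw [natCast_zsmul, nsmul_eq_mul])
  rw [Nat.card_congr (((E1.trans E2).trans E3).trans E4), card_ker_mulLeft c a hc0,
    Nat.gcd_comm]



/-- the subgroup of `ZMod N` of order `a` (for `a ∣ N`) -/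
def stdSub (N a : ℕ) : AddSubgroup (ZMod N) :=
  (AddMonoidHom.mulLeft (((N / a : ℕ) : ZMod N))).range

lemma card_stdSub (N a : ℕ) (hN : 0 < N) (ha : a ∣ N) :
    Nat.card (stdSub N a) = a := by
  have h1 : N / a ∣ N := Nat.div_dvd_of_dvd ha
  rw [stdSub, range_mulLeft_eq_zmultiples, Nat.card_zmultiples,
    ZMod.addOrderOf_coe _ hN.ne', Nat.gcd_eq_right h1, Nat.div_div_self ha hN.ne']

lemma eq_stdSub (N : ℕ) (hN : 0 < N) (A : AddSubgroup (ZMod N)) :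
    A = stdSub N (Nat.card A) := by
  haveI : NeZero N := ⟨hN.ne'⟩
  set a := Nat.card A with ha
  have haN : a ∣ N := by
    have := AddSubgroup.card_addSubgroup_dvd_card A
    rwa [Nat.card_zmod] at this
  have hle : A ≤ (AddMonoidHom.mulLeft ((a : ZMod N))).ker := by
    intro y hy
    rw [AddMonoidHom.mem_ker, mulLeft_apply', ← nsmul_eq_mul]
    have : a • (⟨y, hy⟩ : A) = 0 := card_nsmul_eq_zero'
    have h2 := congrArg (AddSubgroup.subtype A) this
    simpa using h2
  have hker : (AddMonoidHom.mulLeft ((a : ZMod N))).ker = stdSub N a :=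
    ker_eq_range N a hN haN
  have hcard : Nat.card (stdSub N a) = a := card_stdSub N a hN haN
  rw [← hker] at hcard ⊢
  exact AddSubgroup.eq_of_le_of_card_ge hle (by rw [hcard, ← ha])

lemma addSubgroup_eq_of_card_eq {N : ℕ} (hN : 0 < N) {A B : AddSubgroup (ZMod N)}
    (h : Nat.card A = Nat.card B) : A = B := by
  rw [eq_stdSub N hN A, eq_stdSub N hN B, h]

lemma card_mem_divisors {N : ℕ} (hN : 0 < N) (A : AddSubgroup (ZMod N)) :
    Nat.card A ∈ N.divisors := by
  haveI : NeZero N := ⟨hN.ne'⟩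
  rw [Nat.mem_divisors]
  refine ⟨?_, hN.ne'⟩
  have := AddSubgroup.card_addSubgroup_dvd_card A
  rwa [Nat.card_zmod] at this

/-- transfer a sum over subgroups of `ZMod N` to a sum over divisors -/
lemma sum_addSubgroup_eq_sum_divisors {N : ℕ} [Fintype (AddSubgroup (ZMod N))]
    (hN : 0 < N) (f : ℕ → ℂ) :
    ∑ A : AddSubgroup (ZMod N), f (Nat.card A) = ∑ a ∈ N.divisors, f a := by
  haveI : NeZero N := ⟨hN.ne'⟩
  refine Finset.sum_nbij' (fun A => Nat.card A) (fun a => stdSub N a) ?_ ?_ ?_ ?_ ?_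
  · intro A _; exact card_mem_divisors hN A
  · intro a _; exact Finset.mem_univ _
  · intro A _; exact (eq_stdSub N hN A).symm
  · intro a ha; exact card_stdSub N a hN (Nat.mem_divisors.mp ha).1
  · intro A _; rfl


variable {m n : ℕ}

/-- projection invariant -/
def Afn (H : AddSubgroup (ZMod m × ZMod n)) : AddSubgroup (ZMod m) :=
  H.map (AddMonoidHom.fst (ZMod m) (ZMod n))

def Bfn (H : AddSubgroup (ZMod m × ZMod n)) : AddSubgroup (ZMod n) :=
  H.comap (AddMonoidHom.inr (ZMod m) (ZMod n))

lemma mem_Bfn {H : AddSubgroup (ZMod m × ZMod n)} {y : ZMod n} :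
    y ∈ Bfn H ↔ ((0 : ZMod m), y) ∈ H := Iff.rfl

lemma mem_Afn {H : AddSubgroup (ZMod m × ZMod n)} {x : ZMod m} :
    x ∈ Afn H ↔ ∃ p ∈ H, Prod.fst p = x := by
  simp [Afn, AddSubgroup.mem_map]

lemma card_eq_Afn_mul_Bfn (H : AddSubgroup (ZMod m × ZMod n)) :
    Nat.card H = Nat.card (Afn H) * Nat.card (Bfn H) := by
  set φ : H →+ ZMod m := (AddMonoidHom.fst (ZMod m) (ZMod n)).comp H.subtype with hφ
  have hrange : φ.range = Afn H := by
    rw [hφ, AddMonoidHom.range_comp, AddSubgroup.range_subtype]; rfl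
  have e1 : Nat.card H = Nat.card (H ⧸ φ.ker) * Nat.card φ.ker :=
    AddSubgroup.card_eq_card_quotient_mul_card_addSubgroup φ.ker
  have e2 : Nat.card (H ⧸ φ.ker) = Nat.card (Afn H) := by
    rw [Nat.card_congr (QuotientAddGroup.quotientKerEquivRange φ).toEquiv, hrange]
  have e3 : Nat.card φ.ker = Nat.card (Bfn H) := by
    refine Nat.card_congr ⟨fun p => ⟨p.1.1.2, ?_⟩, fun y => ⟨⟨((0 : ZMod m), y.1), y.2⟩, ?_⟩, ?_, ?_⟩
    · have h0 : (p.1 : ZMod m × ZMod n).1 = 0 := p.2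
      have := p.1.2
      rw [mem_Bfn, ← h0]
      exact this
    · exact rfl
    · rintro ⟨⟨⟨x, y⟩, hxy⟩, hx⟩
      have h0 : x = 0 := hx
      subst h0; rfl
    · rintro ⟨y, hy⟩; rfl
  rw [e1, e2, e3]

variable (m n) in
/-- the subgroup associated to `(A, B, f)` -/
def mkH (A : AddSubgroup (ZMod m)) (B : AddSubgroup (ZMod n))
    (f : A →+ ZMod n ⧸ B) : AddSubgroup (ZMod m × ZMod n) where
  carrier := {p | ∃ h : p.1 ∈ A, f ⟨p.1, h⟩ = QuotientAddGroup.mk p.2}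
  zero_mem' := by
    refine ⟨zero_mem A, ?_⟩
    rw [show (⟨(0 : ZMod m × ZMod n).1, zero_mem A⟩ : A) = 0 from rfl, map_zero]
    exact (QuotientAddGroup.mk_zero _).symm
  add_mem' := by
    rintro a b ⟨h1, e1⟩ ⟨h2, e2⟩
    refine ⟨add_mem h1 h2, ?_⟩
    rw [show (⟨(a + b).1, add_mem h1 h2⟩ : A) = ⟨a.1, h1⟩ + ⟨b.1, h2⟩ from rfl, map_add, e1, e2]
    rfl
  neg_mem' := by
    rintro a ⟨h1, e1⟩
    refine ⟨neg_mem h1, ?_⟩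
    rw [show (⟨(-a).1, neg_mem h1⟩ : A) = -⟨a.1, h1⟩ from rfl, map_neg, e1]
    rfl

lemma mem_mkH {A : AddSubgroup (ZMod m)} {B : AddSubgroup (ZMod n)}
    {f : A →+ ZMod n ⧸ B} {p : ZMod m × ZMod n} :
    p ∈ mkH m n A B f ↔ ∃ h : p.1 ∈ A, f ⟨p.1, h⟩ = QuotientAddGroup.mk p.2 := Iff.rfl

lemma Afn_mkH (A : AddSubgroup (ZMod m)) (B : AddSubgroup (ZMod n)) (f : A →+ ZMod n ⧸ B) :
    Afn (mkH m n A B f) = A := by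
  ext x
  rw [mem_Afn]
  constructor
  · rintro ⟨p, hp, rfl⟩; exact (mem_mkH.mp hp).1
  · intro hx
    obtain ⟨y, hy⟩ := QuotientAddGroup.mk_surjective (f ⟨x, hx⟩)
    exact ⟨(x, y), ⟨hx, hy.symm⟩, rfl⟩

lemma Bfn_mkH (A : AddSubgroup (ZMod m)) (B : AddSubgroup (ZMod n)) (f : A →+ ZMod n ⧸ B) :
    Bfn (mkH m n A B f) = B := by
  ext y
  rw [mem_Bfn, mem_mkH]
  constructor
  · rintro ⟨h, e⟩
    rw [show (⟨((0 : ZMod m), y).1, h⟩ : A) = 0 from Subtype.ext rfl, map_zero] at e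
    rw [← QuotientAddGroup.eq_zero_iff]
    exact e.symm
  · intro hy
    refine ⟨zero_mem A, ?_⟩
    rw [show (⟨((0 : ZMod m), y).1, zero_mem A⟩ : A) = 0 from Subtype.ext rfl, map_zero]
    exact ((QuotientAddGroup.eq_zero_iff y).mpr hy).symm

lemma mk_eq_mk_of_mem {H : AddSubgroup (ZMod m × ZMod n)} {B : AddSubgroup (ZMod n)}
    (hB : Bfn H = B) {p q : ZMod m × ZMod n} (hp : p ∈ H) (hq : q ∈ H) (h1 : p.1 = q.1) :
    (QuotientAddGroup.mk p.2 : ZMod n ⧸ B) = QuotientAddGroup.mk q.2 := by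
  rw [QuotientAddGroup.eq_iff_sub_mem, ← hB, mem_Bfn]
  have hmem := AddSubgroup.sub_mem H hp hq
  have h2 : (p - q).1 = 0 := by
    simp [h1]
  have h3 : p - q = ((0 : ZMod m), p.2 - q.2) := by
    ext
    · exact h2
    · rfl
  rwa [h3] at hmem

lemma mkH_injective (A : AddSubgroup (ZMod m)) (B : AddSubgroup (ZMod n)) :
    Function.Injective (mkH m n A B) := by
  intro f g hfg
  ext x
  obtain ⟨y, hy⟩ := QuotientAddGroup.mk_surjective (f x)
  have hx : ((x : ZMod m), y) ∈ mkH m n A B f := ⟨x.2, by rw [Subtype.coe_eta, hy]⟩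
  rw [hfg] at hx
  obtain ⟨h, e⟩ := mem_mkH.mp hx
  rw [show (⟨((x : ZMod m), y).1, h⟩ : A) = x from Subtype.ext rfl] at e
  rw [← hy, e]

lemma mkH_surjective (A : AddSubgroup (ZMod m)) (B : AddSubgroup (ZMod n))
    (H : AddSubgroup (ZMod m × ZMod n)) (hA : Afn H = A) (hB : Bfn H = B) :
    ∃ f : A →+ ZMod n ⧸ B, mkH m n A B f = H := by
  classical
  have pick : ∀ x : A, {p : ZMod m × ZMod n // p ∈ H ∧ p.1 = (x : ZMod m)} := by
    intro x
    have hx : (x : ZMod m) ∈ Afn H := by rw [hA]; exact x.2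
    rw [mem_Afn] at hx
    exact ⟨Classical.choose hx, (Classical.choose_spec hx).1, (Classical.choose_spec hx).2⟩
  refine ⟨{ toFun := fun x => QuotientAddGroup.mk (pick x).1.2
            map_zero' := ?_
            map_add' := ?_ }, ?_⟩
  · exact (QuotientAddGroup.eq_zero_iff _).mpr (by
      rw [← hB, mem_Bfn]
      have h := (pick 0).2
      have : ((0 : ZMod m), (pick 0).1.2) = (pick 0).1 := by
        ext
        · exact h.2.symm
        · rfl
      rw [this]
      exact h.1)
  · intro x y
    have hxy := (pick (x + y)).2
    have hx := (pick x).2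
    have hy := (pick y).2
    have hsum : (pick x).1 + (pick y).1 ∈ H := AddSubgroup.add_mem H hx.1 hy.1
    have h1 : (pick (x + y)).1.1 = ((pick x).1 + (pick y).1).1 := by
      simp [hxy.2, hx.2, hy.2]
    exact mk_eq_mk_of_mem hB hxy.1 hsum h1
  · ext p
    rw [mem_mkH]
    constructor
    · rintro ⟨h, e⟩
      have hp := (pick ⟨p.1, h⟩).2
      have h2' : (pick ⟨p.1, h⟩).1.2 - p.2 ∈ B := by
        rw [← QuotientAddGroup.eq_iff_sub_mem]
        exact e
      have h2 : p.2 - (pick ⟨p.1, h⟩).1.2 ∈ B := by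
        have := AddSubgroup.neg_mem B h2'
        simpa using this
      rw [← hB, mem_Bfn] at h2
      have : p = (pick ⟨p.1, h⟩).1 + ((0 : ZMod m), p.2 - (pick ⟨p.1, h⟩).1.2) := by
        ext
        · simp [hp.2]
        · show p.2 = (pick ⟨p.1, h⟩).1.2 + (p.2 - (pick ⟨p.1, h⟩).1.2); ring
      rw [this]
      exact AddSubgroup.add_mem H hp.1 h2
    · intro hp
      have h : p.1 ∈ A := by rw [← hA]; exact ⟨p, hp, rfl⟩
      refine ⟨h, ?_⟩
      exact mk_eq_mk_of_mem hB (pick ⟨p.1, h⟩).2.1 hp (pick ⟨p.1, h⟩).2.2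

lemma card_fiber (A : AddSubgroup (ZMod m)) (B : AddSubgroup (ZMod n)) :
    Nat.card {H : AddSubgroup (ZMod m × ZMod n) // Afn H = A ∧ Bfn H = B}
      = Nat.card (A →+ ZMod n ⧸ B) := by
  refine (Nat.card_eq_of_bijective
    (fun f => ⟨mkH m n A B f, Afn_mkH A B f, Bfn_mkH A B f⟩) ⟨?_, ?_⟩).symm
  · intro f g h
    exact mkH_injective A B (congrArg Subtype.val h)
  · rintro ⟨H, hA, hB⟩
    obtain ⟨f, hf⟩ := mkH_surjective A B H hA hB
    exact ⟨f, Subtype.ext hf⟩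

open AddSubgroup

section
variable {m n : ℕ}


lemma card_quot (hn : 0 < n) (B : AddSubgroup (ZMod n)) :
    Nat.card (ZMod n ⧸ B) = n / Nat.card B := by
  haveI : NeZero n := ⟨hn.ne'⟩
  have h := AddSubgroup.card_eq_card_quotient_mul_card_addSubgroup B
  rw [Nat.card_zmod] at h
  have hB : 0 < Nat.card B := Nat.card_pos
  exact (Nat.div_eq_of_eq_mul_left hB h).symm

lemma lhs_eq (hm : 0 < m) (hn : 0 < n) (t : ℂ) :
    (∑ᶠ H : AddSubgroup (ZMod m × ZMod n), (Nat.card H : ℂ) ^ t) =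
      ∑ a ∈ m.divisors, ∑ b ∈ n.divisors,
        ((a * b : ℕ) : ℂ) ^ t * ((Nat.gcd a (n / b) : ℕ) : ℂ) := by
  classical
  haveI : NeZero m := ⟨hm.ne'⟩
  haveI : NeZero n := ⟨hn.ne'⟩
  haveI F1 : Fintype (AddSubgroup (ZMod m × ZMod n)) := Fintype.ofFinite _
  haveI F2 : Fintype (AddSubgroup (ZMod m)) := Fintype.ofFinite _
  haveI F3 : Fintype (AddSubgroup (ZMod n)) := Fintype.ofFinite _
  rw [finsum_eq_sum_of_fintype]
  rw [← Finset.sum_fiberwise Finset.univ (fun H => (Afn H, Bfn H))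
    (fun H => (Nat.card H : ℂ) ^ t)]
  have step1 : ∀ P : AddSubgroup (ZMod m) × AddSubgroup (ZMod n),
      (∑ H ∈ Finset.univ.filter (fun H => (Afn H, Bfn H) = P), (Nat.card H : ℂ) ^ t)
        = ((Nat.card P.1 * Nat.card P.2 : ℕ) : ℂ) ^ t
            * ((Nat.gcd (Nat.card P.1) (n / Nat.card P.2) : ℕ) : ℂ) := by
    intro P
    have hval : ∀ H ∈ Finset.univ.filter (fun H => (Afn H, Bfn H) = P),
        (Nat.card H : ℂ) ^ t = ((Nat.card P.1 * Nat.card P.2 : ℕ) : ℂ) ^ t := by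
      intro H hH
      rw [Finset.mem_filter] at hH
      obtain ⟨hA, hB⟩ : Afn H = P.1 ∧ Bfn H = P.2 := by
        simpa [Prod.ext_iff] using hH.2
      rw [card_eq_Afn_mul_Bfn H, hA, hB]
    rw [Finset.sum_congr rfl hval, Finset.sum_const, nsmul_eq_mul, mul_comm]
    congr 1
    have hcard : (Finset.univ.filter (fun H => (Afn H, Bfn H) = P)).card
        = Nat.card {H : AddSubgroup (ZMod m × ZMod n) // Afn H = P.1 ∧ Bfn H = P.2} := by
      rw [Nat.card_eq_fintype_card, Fintype.card_subtype]
      congr 1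
      apply Finset.filter_congr
      intro H _
      simp [Prod.ext_iff]
    rw [hcard, card_fiber P.1 P.2]
    haveI : Finite (ZMod n ⧸ P.2) :=
      Finite.of_surjective _ (QuotientAddGroup.mk'_surjective P.2)
    haveI : IsAddCyclic (ZMod n ⧸ P.2) :=
      isAddCyclic_of_surjective (QuotientAddGroup.mk' P.2) (QuotientAddGroup.mk'_surjective P.2)
    rw [card_addHom_cyclic, card_quot hn P.2]
  rw [Finset.sum_congr rfl (fun P _ => step1 P)]
  rw [Fintype.sum_prod_type]
  rw [sum_addSubgroup_eq_sum_divisors hm (fun a => ∑ B : AddSubgroup (ZMod n),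
    ((a * Nat.card B : ℕ) : ℂ) ^ t * ((Nat.gcd a (n / Nat.card B) : ℕ) : ℂ))]
  refine Finset.sum_congr rfl fun a _ => ?_
  rw [sum_addSubgroup_eq_sum_divisors hn (fun b =>
    ((a * b : ℕ) : ℂ) ^ t * ((Nat.gcd a (n / b) : ℕ) : ℂ))]
end


lemma natmul_cpow (a b : ℕ) (t : ℂ) :
    ((a * b : ℕ) : ℂ) ^ t = (a : ℂ) ^ t * (b : ℂ) ^ t := by
  have h := Complex.mul_cpow_ofReal_nonneg (Nat.cast_nonneg a) (Nat.cast_nonneg b) t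
  push_cast at h ⊢
  exact h

lemma inner_eq (i j : ℕ) (hi : 0 < i) (hj : 0 < j) (t : ℂ) :
    (Nat.lcm i j : ℂ) ^ t *
        ∑ e ∈ (Nat.gcd i j).divisors, (e : ℂ) ^ t * (Nat.totient (Nat.gcd i j / e) : ℂ)
      = ∑ d ∈ (Nat.gcd i j).divisors,
          ((i * (j / d) : ℕ) : ℂ) ^ t * (Nat.totient d : ℂ) := by
  set g := Nat.gcd i j with hg
  have hg0 : 0 < g := Nat.gcd_pos_of_pos_left j hi
  rw [Finset.mul_sum]
  have lhs_eq : ∀ e ∈ g.divisors,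
      (Nat.lcm i j : ℂ) ^ t * ((e : ℂ) ^ t * (Nat.totient (g / e) : ℂ))
        = ((Nat.lcm i j * e : ℕ) : ℂ) ^ t * (Nat.totient (g / e) : ℂ) := by
    intro e _
    rw [natmul_cpow, mul_assoc]
  rw [Finset.sum_congr rfl lhs_eq]
  rw [← Nat.sum_div_divisors g (fun e => ((Nat.lcm i j * e : ℕ) : ℂ) ^ t
    * (Nat.totient (g / e) : ℂ))]
  refine Finset.sum_congr rfl fun d hd => ?_
  obtain ⟨hdg, -⟩ := Nat.mem_divisors.mp hd
  have h1 : g / (g / d) = d := Nat.div_div_self hdg hg0.ne'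
  have h2 : Nat.lcm i j * (g / d) = i * (j / d) := by
    have hdj : d ∣ j := hdg.trans (Nat.gcd_dvd_right i j)
    rw [← Nat.mul_div_assoc _ hdg, ← Nat.mul_div_assoc _ hdj]
    congr 1
    rw [mul_comm]
    exact Nat.gcd_mul_lcm i j
  rw [h1, h2]

lemma reindex (m n : ℕ) (hm : 0 < m) (hn : 0 < n) (t : ℂ) :
    (∑ i ∈ m.divisors, ∑ j ∈ n.divisors, ∑ d ∈ (Nat.gcd i j).divisors,
        ((i * (j / d) : ℕ) : ℂ) ^ t * (Nat.totient d : ℂ))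
      = ∑ a ∈ m.divisors, ∑ b ∈ n.divisors, ∑ d ∈ (Nat.gcd a (n / b)).divisors,
          ((a * b : ℕ) : ℂ) ^ t * (Nat.totient d : ℂ) := by
  rw [← Finset.sum_product' (s := m.divisors) (t := n.divisors), Finset.sum_sigma']
  rw [← Finset.sum_product' (s := m.divisors) (t := n.divisors), Finset.sum_sigma']
  refine Finset.sum_nbij' (fun x => ⟨(x.1.1, x.1.2 / x.2), x.2⟩)
    (fun x => ⟨(x.1.1, x.1.2 * x.2), x.2⟩) ?_ ?_ ?_ ?_ ?_
  · rintro ⟨⟨i, j⟩, d⟩ hx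
    rw [Finset.mem_sigma, Finset.mem_product] at hx
    obtain ⟨⟨him, hjn⟩, hd⟩ := hx
    obtain ⟨hdg, -⟩ := Nat.mem_divisors.mp hd
    have hdi : d ∣ i := hdg.trans (Nat.gcd_dvd_left i j)
    have hdj : d ∣ j := hdg.trans (Nat.gcd_dvd_right i j)
    obtain ⟨hjnd, -⟩ := Nat.mem_divisors.mp hjn
    have hj0 : 0 < j := Nat.pos_of_mem_divisors hjn
    have hd0 : 0 < d := Nat.pos_of_dvd_of_pos hdi (Nat.pos_of_mem_divisors him)
    rw [Finset.mem_sigma, Finset.mem_product]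
    have hjd_n : j / d ∣ n := (Nat.div_dvd_of_dvd hdj).trans hjnd
    refine ⟨⟨him, Nat.mem_divisors.mpr ⟨hjd_n, hn.ne'⟩⟩, ?_⟩
    rw [Nat.mem_divisors]
    refine ⟨Nat.dvd_gcd hdi ?_, ?_⟩
    · rw [Nat.dvd_div_iff_mul_dvd hjd_n, Nat.div_mul_cancel hdj]
      exact hjnd
    · have : 0 < Nat.gcd i (n / (j / d)) :=
        Nat.gcd_pos_of_pos_left _ (Nat.pos_of_mem_divisors him)
      exact this.ne'
  · rintro ⟨⟨a, b⟩, d⟩ hx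
    rw [Finset.mem_sigma, Finset.mem_product] at hx
    obtain ⟨⟨ham, hbn⟩, hd⟩ := hx
    obtain ⟨hdg, -⟩ := Nat.mem_divisors.mp hd
    have hda : d ∣ a := hdg.trans (Nat.gcd_dvd_left _ _)
    have hdnb : d ∣ n / b := hdg.trans (Nat.gcd_dvd_right _ _)
    obtain ⟨hbnd, -⟩ := Nat.mem_divisors.mp hbn
    have hd0 : 0 < d := Nat.pos_of_dvd_of_pos hda (Nat.pos_of_mem_divisors ham)
    rw [Finset.mem_sigma, Finset.mem_product]
    have hbd_n : b * d ∣ n := by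
      rw [← Nat.dvd_div_iff_mul_dvd hbnd]
      exact hdnb
    refine ⟨⟨ham, Nat.mem_divisors.mpr ⟨hbd_n, hn.ne'⟩⟩, ?_⟩
    rw [Nat.mem_divisors]
    refine ⟨Nat.dvd_gcd hda (dvd_mul_left d b), ?_⟩
    have : 0 < Nat.gcd a (b * d) :=
      Nat.gcd_pos_of_pos_left _ (Nat.pos_of_mem_divisors ham)
    exact this.ne'
  · rintro ⟨⟨i, j⟩, d⟩ hx
    rw [Finset.mem_sigma, Finset.mem_product] at hx
    obtain ⟨⟨him, hjn⟩, hd⟩ := hx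
    obtain ⟨hdg, -⟩ := Nat.mem_divisors.mp hd
    have hdj : d ∣ j := hdg.trans (Nat.gcd_dvd_right i j)
    simp [Nat.div_mul_cancel hdj]
  · rintro ⟨⟨a, b⟩, d⟩ hx
    rw [Finset.mem_sigma, Finset.mem_product] at hx
    obtain ⟨⟨ham, hbn⟩, hd⟩ := hx
    obtain ⟨hdg, -⟩ := Nat.mem_divisors.mp hd
    have hda : d ∣ a := hdg.trans (Nat.gcd_dvd_left _ _)
    have hd0 : 0 < d := Nat.pos_of_dvd_of_pos hda (Nat.pos_of_mem_divisors ham)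
    have hb : b * d / d = b := by
      rw [Nat.mul_div_assoc b dvd_rfl, Nat.div_self hd0, mul_one]
    simp [hb]
  · rintro ⟨⟨i, j⟩, d⟩ hx
    rfl


theorem sigma_t_subgroups' (m n : ℕ) (hm : 0 < m) (hn : 0 < n) (t : ℂ) :
    (∑ᶠ H : AddSubgroup (ZMod m × ZMod n), (Nat.card H : ℂ) ^ t) =
      ∑ i ∈ m.divisors, ∑ j ∈ n.divisors,
        (Nat.lcm i j : ℂ) ^ t *
          ∑ e ∈ (Nat.gcd i j).divisors, (e : ℂ) ^ t * (Nat.totient (Nat.gcd i j / e) : ℂ) := by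
  rw [lhs_eq hm hn t]
  refine Eq.symm ?_
  calc
    (∑ i ∈ m.divisors, ∑ j ∈ n.divisors,
        (Nat.lcm i j : ℂ) ^ t *
          ∑ e ∈ (Nat.gcd i j).divisors, (e : ℂ) ^ t * (Nat.totient (Nat.gcd i j / e) : ℂ))
      = ∑ i ∈ m.divisors, ∑ j ∈ n.divisors, ∑ d ∈ (Nat.gcd i j).divisors,
          ((i * (j / d) : ℕ) : ℂ) ^ t * (Nat.totient d : ℂ) := by
        refine Finset.sum_congr rfl fun i hi => Finset.sum_congr rfl fun j hj => ?_
        exact inner_eq i j (Nat.pos_of_mem_divisors hi) (Nat.pos_of_mem_divisors hj) t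
    _ = ∑ a ∈ m.divisors, ∑ b ∈ n.divisors, ∑ d ∈ (Nat.gcd a (n / b)).divisors,
          ((a * b : ℕ) : ℂ) ^ t * (Nat.totient d : ℂ) := reindex m n hm hn t
    _ = ∑ a ∈ m.divisors, ∑ b ∈ n.divisors,
          ((a * b : ℕ) : ℂ) ^ t * ((Nat.gcd a (n / b) : ℕ) : ℂ) := by
        refine Finset.sum_congr rfl fun a _ => Finset.sum_congr rfl fun b _ => ?_
        rw [← Finset.mul_sum]
        congr 1
        rw [← Nat.cast_sum]
        rw [Nat.sum_totient]
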